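/- Let c > 0, κ > 0, v¹, v² ∈ ℝ, let (T̂¹,T̂²), (X̂¹,X̂²) be Euclidean-orthonormal in ℝ², and let g, L, L̲, X̂, μ be as in the acoustical null-frame setup. Then the matrix G of g in the standard basis of ℝ³ is invertible, and for every linear functional ξ on ℝ³ the inverse-metric square norm satisfies ξᵀ·G⁻¹·ξ = -(1/μ)·ξ(L)·ξ(L̲) + (ξ(X̂))², where ξ is identified with its coordinate (row) vector. -/

import Mathlib

open Matrix

/-- Acoustical metric at a point: `g(V,W) = -c²V⁰W⁰ + Σᵢ(Vⁱ - vⁱV⁰)(Wⁱ - vⁱW⁰)`. -/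
def gMet (c v1 v2 : ℝ) (V W : ℝ × ℝ × ℝ) : ℝ :=
  -(c ^ 2) * V.1 * W.1 + (V.2.1 - v1 * V.1) * (W.2.1 - v1 * W.1)
    + (V.2.2 - v2 * V.1) * (W.2.2 - v2 * W.1)

/-- Null vector `L = B - c T̂` with `B = (1, v¹, v²)` and `T̂ = (0, T̂¹, T̂²)`. -/
def Lvec (c v1 v2 T1 T2 : ℝ) : ℝ × ℝ × ℝ :=
  (((1 : ℝ), v1, v2) : ℝ × ℝ × ℝ) - c • (((0 : ℝ), T1, T2) : ℝ × ℝ × ℝ)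

/-- Left-going null vector `L̲ = c⁻¹κ L + 2T` with `T = κ T̂`. -/
noncomputable def Lbvec (c κ v1 v2 T1 T2 : ℝ) : ℝ × ℝ × ℝ :=
  (c⁻¹ * κ) • Lvec c v1 v2 T1 T2 + (2 : ℝ) • (κ • (((0 : ℝ), T1, T2) : ℝ × ℝ × ℝ))

/-- Standard basis of `ℝ³ = ℝ × ℝ × ℝ`. -/
def stdB : Fin 3 → ℝ × ℝ × ℝ := ![(1, 0, 0), (0, 1, 0), (0, 0, 1)]

/-- Matrix of the acoustical metric in the standard basis. -/
def GMat (c v1 v2 : ℝ) : Matrix (Fin 3) (Fin 3) ℝ :=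
  Matrix.of fun i j => gMet c v1 v2 (stdB i) (stdB j)

/-- A linear functional on `ℝ³` identified with its coordinate vector, applied to a vector. -/
def covApp (ξ : Fin 3 → ℝ) (V : ℝ × ℝ × ℝ) : ℝ :=
  ξ 0 * V.1 + ξ 1 * V.2.1 + ξ 2 * V.2.2

/-- The key identity for the quadratic form of the inverse matrix, for a general
2D unit vector `(T1,T2)` and the rotated vector `(X1,X2)` with `X1 = s * (-T2)`, `X2 = s * T1`. -/
theorem invQuad_aux (c κ v1 v2 T1 T2 X1 X2 : ℝ) (hc : c ≠ 0) (hκ : κ ≠ 0)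
    (hT : T1 ^ 2 + T2 ^ 2 = 1)
    (hcase : (X1 = -T2 ∧ X2 = T1) ∨ (X1 = T2 ∧ X2 = -T1)) (ξ : Fin 3 → ℝ) :
    ξ ⬝ᵥ ((!![-(1/c^2), -v1/c^2, -v2/c^2; -v1/c^2, 1 - v1^2/c^2, -(v1*v2)/c^2;
        -v2/c^2, -(v1*v2)/c^2, 1 - v2^2/c^2] : Matrix (Fin 3) (Fin 3) ℝ) *ᵥ ξ)
      = -(1 / (c * κ)) * covApp ξ (Lvec c v1 v2 T1 T2)
          * covApp ξ (Lbvec c κ v1 v2 T1 T2)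
        + covApp ξ (0, X1, X2) ^ 2 := by
  rcases hcase with ⟨e1, e2⟩ | ⟨e1, e2⟩ <;> subst e1 <;> subst e2 <;>
  · simp only [covApp, Lvec, Lbvec, Matrix.mulVec, dotProduct, Fin.sum_univ_three,
      Prod.fst_sub, Prod.snd_sub, Prod.smul_mk, Prod.fst_add, Prod.snd_add, smul_eq_mul,
      Prod.mk_sub_mk, Prod.mk_add_mk, Matrix.cons_val_zero, Matrix.cons_val_one,
      Matrix.head_cons, Matrix.cons_val_two, Matrix.tail_cons, Matrix.head_fin_const, Matrix.of_apply]
    field_simp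
    linear_combination (-(c^2)*(ξ 1^2 + ξ 2^2)) * hT

/-- **Inverse acoustical metric in the null frame**: the matrix `G` of `g` is invertible and,
for every linear functional `ξ`, `ξᵀ G⁻¹ ξ = -(1/μ) ξ(L) ξ(L̲) + (ξ(X̂))²` with `μ = cκ`. -/
theorem stmt_11 (c κ v1 v2 T1 T2 X1 X2 : ℝ) (hc : 0 < c) (hκ : 0 < κ)
    (hT : T1 ^ 2 + T2 ^ 2 = 1) (hX : X1 ^ 2 + X2 ^ 2 = 1)
    (hTX : T1 * X1 + T2 * X2 = 0) :
    IsUnit (GMat c v1 v2).det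
    ∧ ∀ ξ : Fin 3 → ℝ,
        ξ ⬝ᵥ ((GMat c v1 v2)⁻¹ *ᵥ ξ)
          = -(1 / (c * κ)) * covApp ξ (Lvec c v1 v2 T1 T2)
              * covApp ξ (Lbvec c κ v1 v2 T1 T2)
            + covApp ξ (0, X1, X2) ^ 2 := by
  have hc0 : c ≠ 0 := ne_of_gt hc
  have hκ0 : κ ≠ 0 := ne_of_gt hκ
  have hG : GMat c v1 v2 = !![-(c^2)+v1^2+v2^2, -v1, -v2; -v1, 1, 0; -v2, 0, 1] := by
    ext i j
    fin_cases i <;> fin_cases j <;> simp [GMat, gMet, stdB] <;> ring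
  have hmul : GMat c v1 v2 *
      !![-(1/c^2), -v1/c^2, -v2/c^2; -v1/c^2, 1 - v1^2/c^2, -(v1*v2)/c^2;
        -v2/c^2, -(v1*v2)/c^2, 1 - v2^2/c^2] = 1 := by
    rw [hG]
    ext i j
    fin_cases i <;> fin_cases j <;>
      simp [Matrix.mul_apply, Fin.sum_univ_three] <;> field_simp <;> ring
  have hdet : IsUnit (GMat c v1 v2).det := by
    exact IsUnit.of_mul_eq_one
      (Matrix.det !![-(1/c^2), -v1/c^2, -v2/c^2; -v1/c^2, 1 - v1^2/c^2, -(v1*v2)/c^2;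
        -v2/c^2, -(v1*v2)/c^2, 1 - v2^2/c^2])
      (by rw [← Matrix.det_mul, hmul, Matrix.det_one])
  have hinv : (GMat c v1 v2)⁻¹ =
      !![-(1/c^2), -v1/c^2, -v2/c^2; -v1/c^2, 1 - v1^2/c^2, -(v1*v2)/c^2;
        -v2/c^2, -(v1*v2)/c^2, 1 - v2^2/c^2] := Matrix.inv_eq_right_inv hmul
  refine ⟨hdet, fun ξ => ?_⟩
  rw [hinv]
  -- determine the rotation structure of (X1, X2)
  have he : (T1*X2 - T2*X1 - 1) * (T1*X2 - T2*X1 + 1) = 0 := by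
    nlinarith [sq_nonneg (T1*X1+T2*X2)]
  have h1 : X1 * (T1*X2 - T2*X1) = -T2 := by linear_combination X2 * hTX - T2 * hX
  have h2 : X2 * (T1*X2 - T2*X1) = T1 := by linear_combination -X1 * hTX + T1 * hX
  apply invQuad_aux c κ v1 v2 T1 T2 X1 X2 hc0 hκ0 hT _ ξ
  rcases mul_eq_zero.mp he with h | h
  · exact Or.inl ⟨by linear_combination h1 - X1 * h, by linear_combination h2 - X2 * h⟩
  · exact Or.inr ⟨by linear_combination X1 * h - h1, by linear_combination X2 * h - h2⟩
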